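/- As d → ∞, β(d) := (e^{d+1}·Γ(d,d+1) − (d-1)!)/(d+1)^d satisfies β(d) ~ sqrt(π/(2d)), i.e., lim_{d→∞} β(d)·sqrt(2d/π) = 1. -/

import Mathlib

open Finset Real Filter

/-- Incomplete gamma function at natural arguments. -/
noncomputable def incGamma (m : ℕ) (n : ℝ) : ℝ :=
  (Nat.factorial (m - 1) : ℝ) * Real.exp (-n) *
    ∑ i ∈ Finset.range m, n ^ i / (Nat.factorial i : ℝ)

/-- Probability a non-root spreader contacts a fixed neighbor before stifling. -/
noncomputable def beta (d : ℕ) : ℝ :=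
  (Real.exp ((d : ℝ) + 1) * incGamma d ((d : ℝ) + 1) - (Nat.factorial (d - 1) : ℝ)) /
    ((d : ℝ) + 1) ^ d

open MeasureTheory Set in
private lemma pow_exp_tendsto (b : ℝ) (hb : 0 < b) (i : ℕ) :
    Tendsto (fun x : ℝ => x ^ i * Real.exp (-(b * x))) atTop (nhds 0) := by
  have h1 := (tendsto_pow_mul_exp_neg_atTop_nhds_zero i).comp
    (tendsto_id.const_mul_atTop hb)
  have h2 : Tendsto (fun x : ℝ => b ^ i * (x ^ i * Real.exp (-(b * x)))) atTop (nhds 0) := by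
    refine h1.congr fun x => ?_
    simp [Function.comp, mul_pow, mul_comm, mul_assoc, mul_left_comm]
  have := h2.const_mul ((b : ℝ) ^ i)⁻¹
  simp only [mul_zero] at this
  refine this.congr fun x => ?_
  field_simp

open MeasureTheory Set in
private lemma key_integral (m : ℕ) :
    ∫ s in Ioi (0:ℝ), (1+s)^m * Real.exp (-(((m:ℝ)+2)*s))
      = (Nat.factorial m : ℝ) * (∑ i ∈ range (m+1), ((m:ℝ)+2)^i / (Nat.factorial i))
        / ((m:ℝ)+2)^(m+1) := by
  set M : ℝ := (m : ℝ) with hMdef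
  have hM : (0:ℝ) < M + 2 := by positivity
  set c : ℕ → ℝ := fun i => (Nat.factorial m : ℝ) / ((Nat.factorial i : ℝ) * (M+2)^(m+1-i))
    with hc
  set F : ℝ → ℝ := fun s => -(Real.exp (-((M+2)*s)) * ∑ i ∈ range (m+1), c i * (1+s)^i)
    with hF
  have hstep : ∀ i ≤ m, (M+2) * c i = ((i:ℝ)+1) * c (i+1) := by
    intro i hi
    have h1 : m + 1 - i = (m - i) + 1 := by omega
    have h2 : m + 1 - (i+1) = m - i := by omega
    simp only [hc, h1, h2, Nat.factorial_succ, pow_succ]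
    push_cast
    field_simp
  have hident : ∀ s : ℝ,
      (M+2) * (∑ i ∈ range (m+1), c i * (1+s)^i)
        - (∑ i ∈ range (m+1), c i * ((i:ℝ) * (1+s)^(i-1))) = (1+s)^m := by
    intro s
    rw [Finset.mul_sum, Finset.sum_range_succ (fun i => (M+2) * (c i * (1+s)^i)),
        Finset.sum_range_succ' (fun i => c i * ((i:ℝ) * (1+s)^(i-1)))]
    have htop : (M+2) * (c m * (1+s)^m) = (1+s)^m := by
      have h1 : m + 1 - m = 1 := by omega
      simp only [hc, h1, pow_one]
      have h2 : (Nat.factorial m : ℝ) ≠ 0 := by positivity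
      field_simp
    have hterm : ∀ i ∈ range m, (M+2) * (c i * (1+s)^i)
        = c (i+1) * (((i:ℝ)+1) * (1+s)^(i+1-1)) := by
      intro i hi
      have hs := hstep i (le_of_lt (mem_range.mp hi))
      have h3 : i + 1 - 1 = i := by omega
      rw [h3]
      linear_combination (1+s)^i * hs
    rw [Finset.sum_congr rfl hterm, htop]
    push_cast
    ring
  have hderiv : ∀ s : ℝ, HasDerivAt F ((1+s)^m * Real.exp (-((M+2)*s))) s := by
    intro s
    have h1 : HasDerivAt (fun s : ℝ => -((M+2)*s)) (-(M+2)) s := by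
      simpa using ((hasDerivAt_id s).const_mul (M+2)).fun_neg
    have hexp : HasDerivAt (fun s : ℝ => Real.exp (-((M+2)*s)))
        (Real.exp (-((M+2)*s)) * (-(M+2))) s := h1.exp
    have hone : HasDerivAt (fun s : ℝ => 1 + s) 1 s := by
      simpa using (hasDerivAt_id s).const_add 1
    have hsum : HasDerivAt (fun s : ℝ => ∑ i ∈ range (m+1), c i * (1+s)^i)
        (∑ i ∈ range (m+1), c i * ((i:ℝ) * (1+s)^(i-1))) s := by
      refine HasDerivAt.fun_sum fun i _ => ?_
      have := (hone.pow i).const_mul (c i)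
      simpa [mul_comm, mul_assoc] using this
    have hmul := (hexp.fun_mul hsum).fun_neg
    refine hmul.congr_deriv ?_
    have hid := hident s
    set G := ∑ i ∈ range (m+1), c i * (1+s)^i
    set G' := ∑ i ∈ range (m+1), c i * ((i:ℝ) * (1+s)^(i-1))
    linear_combination (Real.exp (-((M+2)*s))) * hid
  have hF0 : F 0 = -(∑ i ∈ range (m+1), c i) := by
    simp [hF]
  have htend : Tendsto F atTop (nhds 0) := by
    have hterm : ∀ i : ℕ, Tendsto (fun s : ℝ => c i * (1+s)^i * Real.exp (-((M+2)*s)))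
        atTop (nhds 0) := by
      intro i
      have hcomp : Tendsto (fun s : ℝ => 1 + s) atTop atTop :=
        tendsto_atTop_add_const_left _ 1 tendsto_id
      have h1 := (pow_exp_tendsto (M+2) hM i).comp hcomp
      have h2 := (h1.const_mul (c i * Real.exp (M+2)))
      simp only [mul_zero] at h2
      refine h2.congr fun x => ?_
      simp only [Function.comp]
      have hE : Real.exp (M+2) * Real.exp (-((M+2)*(1+x))) = Real.exp (-((M+2)*x)) := by
        rw [← Real.exp_add]; congr 1; ring
      linear_combination (c i * (1+x)^i) * hE
    have hsum : Tendsto (fun s : ℝ => ∑ i ∈ range (m+1),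
        c i * (1+s)^i * Real.exp (-((M+2)*s))) atTop (nhds 0) := by
      have := tendsto_finset_sum (range (m+1)) (fun i (_ : i ∈ range (m+1)) => hterm i)
      simpa using this
    have hneg := hsum.neg
    simp only [neg_zero] at hneg
    refine hneg.congr fun s => ?_
    simp only [hF, Finset.mul_sum, neg_inj]
    exact Finset.sum_congr rfl fun i _ => by ring
  have hint : IntegrableOn (fun s : ℝ => (1+s)^m * Real.exp (-((M+2)*s))) (Ioi (0:ℝ)) := by
    have hg : IntegrableOn (fun s : ℝ => Real.exp (-(2*s))) (Ioi (0:ℝ)) := by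
      simpa using exp_neg_integrableOn_Ioi 0 (by norm_num : (0:ℝ) < 2)
    refine hg.mono' ?_ ?_
    · exact (((continuous_const.add continuous_id).pow m).mul
        (Real.continuous_exp.comp ((continuous_const.mul continuous_id).neg))).aestronglyMeasurable
    · filter_upwards [ae_restrict_mem measurableSet_Ioi] with s hs
      have hs0 : (0:ℝ) < s := hs
      have h1 : (1+s)^m ≤ Real.exp s ^ m := by
        apply pow_le_pow_left₀ (by linarith)
        linarith [Real.add_one_le_exp s]
      have h2 : Real.exp s ^ m = Real.exp ((m:ℝ) * s) := by
        rw [← Real.exp_nat_mul]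
      rw [Real.norm_eq_abs, abs_of_nonneg (by positivity)]
      calc (1+s)^m * Real.exp (-((M+2)*s)) ≤ Real.exp ((m:ℝ)*s) * Real.exp (-((M+2)*s)) := by
            rw [← h2]; exact mul_le_mul_of_nonneg_right h1 (by positivity)
        _ = Real.exp (-(2*s)) := by
            rw [← Real.exp_add]; congr 1; rw [hMdef]; ring
  have key := integral_Ioi_of_hasDerivAt_of_tendsto
    (f := F) (f' := fun s => (1+s)^m * Real.exp (-((M+2)*s))) (a := 0)
    (hderiv 0).continuousAt.continuousWithinAt (fun x _ => hderiv x) hint htend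
  rw [key, hF0, zero_sub, neg_neg]
  rw [Finset.mul_sum, Finset.sum_div]
  refine Finset.sum_congr rfl fun i hi => ?_
  have hi' : i ≤ m := Nat.lt_succ_iff.mp (mem_range.mp hi)
  have hpow : (M+2)^(m+1) = (M+2)^(m+1-i) * (M+2)^i := by
    rw [← pow_add]; congr 1; omega
  have h1 : (Nat.factorial i : ℝ) ≠ 0 := by positivity
  have h2 : (M+2) ≠ 0 := hM.ne'
  simp only [hc]
  rw [hpow]
  field_simp

private lemma alg1 {w x : ℝ} (hw1 : 1 ≤ w) (hw2 : w^2 = 1+x) (hx1 : x ≤ 1) :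
    x^2 ≤ 7*(w-1)^2 := by
  have hw32 : w ≤ 3/2 := by nlinarith
  have h9 : (w+1)^2 ≤ 7 := by nlinarith
  nlinarith [mul_le_mul_of_nonneg_left h9 (sq_nonneg (w-1))]

private lemma alg2 {w x : ℝ} (hw1 : 1 ≤ w) (hw2 : w^2 = 1+x) (hx1 : 1 ≤ x) :
    x ≤ 8*(w-1)^2 := by
  have hw97 : 9/7 ≤ w := by nlinarith
  nlinarith [mul_nonneg (show (0:ℝ) ≤ 7*w-9 by linarith) (show (0:ℝ) ≤ w-1 by linarith)]

private lemma alg3 {w x D : ℝ} (hw1 : 1 ≤ w) (hD : 1 ≤ D)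
    (hlog : (D-1)*Real.log (1+x) ≤ (D-1)*(2*(w-1)))
    (hw2 : w^2 = 1+x) : (D-1) * Real.log (1+x) - (D+1)*x ≤ -((D+1)*(w-1)^2) := by
  nlinarith [hlog]

private lemma alg4 {w x D u : ℝ} (hD : 1 ≤ D) (h7 : x^2 ≤ 7*(w-1)^2) (hdx2 : D * x^2 = u^2) :
    -((D+1)*(w-1)^2) ≤ -(1/7)*u^2 := by
  nlinarith [mul_le_mul_of_nonneg_left h7 (show (0:ℝ) ≤ D by linarith), sq_nonneg (w-1)]

private lemma alg5 {w x D u : ℝ} (hD : 1 ≤ D) (h8 : x ≤ 8*(w-1)^2) (hdx : D * x = Real.sqrt D * u)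
    (hu : u ≤ Real.sqrt D * u) : -((D+1)*(w-1)^2) ≤ -(1/8)*u := by
  nlinarith [mul_le_mul_of_nonneg_left h8 (show (0:ℝ) ≤ D by linarith), sq_nonneg (w-1)]

private lemma H_eq (d : ℕ) (hd : 1 ≤ d) {x : ℝ} (hx : 0 < x) :
    (1+x)^(d-1) * Real.exp (-(((d:ℝ)+1)*x))
      = Real.exp (((d:ℝ)-1) * Real.log (1+x) - ((d:ℝ)+1)*x) := by
  have h1 : (1+x)^(d-1) = Real.exp ((((d-1:ℕ)):ℝ) * Real.log (1+x)) := by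
    rw [← Real.exp_log (show (0:ℝ) < 1+x by linarith), ← Real.exp_nat_mul, Real.log_exp]
  rw [h1, ← Real.exp_add]
  congr 1
  have h2 : (((d-1:ℕ)):ℝ) = (d:ℝ) - 1 := by
    have := Nat.cast_sub hd (R := ℝ)
    simpa using this
  rw [h2]; ring

private lemma H_le (d : ℕ) (hd : 1 ≤ d) (u : ℝ) (hu : 0 < u) :
    (1+u/Real.sqrt d)^(d-1) * Real.exp (-(((d:ℝ)+1)*(u/Real.sqrt d)))
      ≤ Real.exp (-(1/7)*u^2) + Real.exp (-(1/8)*u) := by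
  have hd1 : (1:ℝ) ≤ (d:ℝ) := by exact_mod_cast hd
  have hsd : 0 < Real.sqrt d := Real.sqrt_pos.mpr (by linarith)
  have hsd1 : 1 ≤ Real.sqrt d := by
    rw [show (1:ℝ) = Real.sqrt 1 by simp]
    exact Real.sqrt_le_sqrt (by linarith)
  have hsq : Real.sqrt d * Real.sqrt d = (d:ℝ) := Real.mul_self_sqrt (by linarith)
  obtain ⟨x, hxdef⟩ : ∃ x : ℝ, x = u / Real.sqrt d := ⟨_, rfl⟩
  rw [← hxdef]
  have hx : 0 < x := hxdef ▸ div_pos hu hsd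
  have hdx2 : (d:ℝ) * x^2 = u^2 := by
    rw [hxdef, div_pow, Real.sq_sqrt (by linarith)]
    field_simp
  have hdx : (d:ℝ) * x = Real.sqrt d * u := by
    rw [hxdef]
    field_simp
    nlinarith [hsq]
  obtain ⟨w, hwdef⟩ : ∃ w : ℝ, w = Real.sqrt (1+x) := ⟨_, rfl⟩
  have hw0 : 0 < w := hwdef ▸ Real.sqrt_pos.mpr (by linarith)
  have hw2 : w^2 = 1+x := hwdef ▸ Real.sq_sqrt (by linarith)
  have hw1 : 1 ≤ w := by nlinarith
  have hlog : Real.log (1+x) ≤ 2*(w-1) := by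
    have h1 : Real.log w = Real.log (1+x) / 2 := hwdef ▸ Real.log_sqrt (by linarith)
    have h2 := Real.log_le_sub_one_of_pos hw0
    linarith
  have hgb := alg3 hw1 hd1
    (mul_le_mul_of_nonneg_left hlog (by linarith : (0:ℝ) ≤ (d:ℝ)-1)) hw2
  rw [H_eq d hd hx]
  rcases le_or_gt x 1 with hx1 | hx1
  · have hexp := le_trans hgb (alg4 hd1 (alg1 hw1 hw2 hx1) hdx2)
    calc Real.exp _ ≤ Real.exp (-(1/7)*u^2) := Real.exp_le_exp.mpr hexp
      _ ≤ _ := le_add_of_nonneg_right (Real.exp_pos _).le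
  · have hu' : u ≤ Real.sqrt d * u := le_mul_of_one_le_left hu.le hsd1
    have hexp := le_trans hgb (alg5 hd1 (alg2 hw1 hw2 hx1.le) hdx hu')
    calc Real.exp _ ≤ Real.exp (-(1/8)*u) := Real.exp_le_exp.mpr hexp
      _ ≤ _ := le_add_of_nonneg_left (Real.exp_pos _).le

private lemma sqrt_nat_atTop : Tendsto (fun d : ℕ => Real.sqrt d) atTop atTop := by
  apply tendsto_atTop_atTop.mpr
  intro b
  refine ⟨⌈b^2⌉₊ + 1, fun d hd => ?_⟩
  have h1 : b^2 ≤ (d:ℝ) := le_trans (Nat.le_ceil _) (by exact_mod_cast Nat.le_of_succ_le hd)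
  rcases le_or_gt b 0 with hb|hb
  · exact hb.trans (Real.sqrt_nonneg _)
  · exact (Real.le_sqrt' hb).mpr h1

private lemma H_lim (u : ℝ) (hu : 0 < u) :
    Tendsto (fun d : ℕ => (1+u/Real.sqrt d)^(d-1) * Real.exp (-(((d:ℝ)+1)*(u/Real.sqrt d))))
      atTop (nhds (Real.exp (-(1/2)*u^2))) := by
  set x : ℕ → ℝ := fun d => u / Real.sqrt d with hxdef
  set R : ℕ → ℝ := fun d => Real.log (1 + x d) - x d + (x d)^2/2 with hRdef
  set g : ℕ → ℝ := fun d => ((d:ℝ)-1)*(R d) - ((d:ℝ)-1)*(x d)^2/2 - 2*(x d) with hgdef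
  have hsqT : Tendsto (fun d : ℕ => Real.sqrt d) atTop atTop := sqrt_nat_atTop
  have hx0 : Tendsto x atTop (nhds 0) := tendsto_const_nhds.div_atTop hsqT
  have hA : Tendsto (fun d : ℕ => ((d:ℝ)-1)*(R d)) atTop (nhds 0) := by
    apply squeeze_zero_norm' (a := fun d : ℕ => 2*u^3/Real.sqrt d)
    · filter_upwards [hsqT.eventually_ge_atTop (2*u), eventually_ge_atTop 1] with d h2u hd1
      have hd1' : (1:ℝ) ≤ (d:ℝ) := by exact_mod_cast hd1
      have hsd : 0 < Real.sqrt d := Real.sqrt_pos.mpr (by linarith)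
      have hxpos : 0 < x d := div_pos hu hsd
      have hxhalf : x d ≤ 1/2 := by
        rw [hxdef]
        rw [div_le_iff₀ hsd]
        linarith
      have hlt : |(-(x d))| < 1 := by rw [abs_neg, abs_of_pos hxpos]; linarith
      have key := Real.abs_log_sub_add_sum_range_le hlt 2
      have hsum : (∑ i ∈ range 2, (-(x d))^(i+1)/((i:ℝ)+1)) = -(x d) + (x d)^2/2 := by
        rw [Finset.sum_range_succ, Finset.sum_range_succ, Finset.sum_range_zero]
        push_cast
        ring
      rw [hsum, abs_neg, abs_of_pos hxpos] at key
      have hR : |R d| ≤ 2*(x d)^3 := by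
        have h1 : |R d| ≤ (x d)^3/(1 - x d) := by
          rw [hRdef]
          calc |Real.log (1 + x d) - x d + (x d)^2/2|
              = |(-(x d) + (x d)^2/2) + Real.log (1 - -(x d))| := by ring_nf
            _ ≤ (x d)^3/(1 - x d) := key
        have h2 : (x d)^3/(1 - x d) ≤ 2*(x d)^3 := by
          rw [div_le_iff₀ (by linarith)]
          nlinarith [pow_pos hxpos 3]
        linarith
      have hx3 : (d:ℝ) * (x d)^3 ≤ u^3 / Real.sqrt d := by
        have hsq : Real.sqrt d * Real.sqrt d = (d:ℝ) := Real.mul_self_sqrt (by linarith)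
        have h3 : ((Real.sqrt d)^3) = (d:ℝ) * Real.sqrt d := by
          rw [pow_succ, pow_two, hsq]
        have hd0 : ((d:ℝ)) ≠ 0 := by linarith
        have heq : (d:ℝ) * (x d)^3 = u^3 / Real.sqrt d := by
          rw [hxdef]
          simp only []
          rw [div_pow, h3]
          field_simp
        exact le_of_eq heq
      rw [Real.norm_eq_abs, abs_mul, abs_of_nonneg (by linarith : (0:ℝ) ≤ (d:ℝ)-1)]
      calc ((d:ℝ)-1) * |R d| ≤ (d:ℝ) * (2*(x d)^3) := by
            have := abs_nonneg (R d)
            nlinarith [hR, pow_pos hxpos 3]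
        _ = 2 * ((d:ℝ) * (x d)^3) := by ring
        _ ≤ 2 * (u^3/Real.sqrt d) := by linarith [hx3]
        _ = 2*u^3/Real.sqrt d := by ring
    · have := (tendsto_const_nhds (x := (2*u^3 : ℝ)) (f := atTop (α := ℕ))).div_atTop hsqT
      exact this
  have hB : Tendsto (fun d : ℕ => ((d:ℝ)-1)*(x d)^2/2) atTop (nhds (u^2/2)) := by
    have h1 : Tendsto (fun d : ℕ => (1 - 1/(d:ℝ)) * (u^2/2)) atTop (nhds (u^2/2)) := by
      have := (tendsto_const_nhds (x := (1:ℝ)) (f := atTop (α := ℕ))).sub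
        tendsto_one_div_atTop_nhds_zero_nat
      simpa using this.mul_const (u^2/2)
    apply h1.congr'
    filter_upwards [eventually_ge_atTop 1] with d hd1
    have hd1' : (1:ℝ) ≤ (d:ℝ) := by exact_mod_cast hd1
    have hsd : 0 < Real.sqrt d := Real.sqrt_pos.mpr (by linarith)
    have hsq : Real.sqrt d * Real.sqrt d = (d:ℝ) := Real.mul_self_sqrt (by linarith)
    have hx2 : (x d)^2 = u^2/(d:ℝ) := by
      rw [hxdef]
      simp only []
      rw [div_pow]
      congr 1
      nlinarith [hsq]
    rw [hx2]
    field_simp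
  have hC : Tendsto (fun d : ℕ => 2 * x d) atTop (nhds 0) := by
    simpa using hx0.const_mul 2
  have hg : Tendsto g atTop (nhds (-(1/2)*u^2)) := by
    have hsub := (hA.sub hB).sub hC
    have he : (0:ℝ) - u^2/2 - 0 = -(1/2)*u^2 := by ring
    rw [he] at hsub
    exact hsub
  have hexp : Tendsto (fun d : ℕ => Real.exp (g d)) atTop (nhds (Real.exp (-(1/2)*u^2))) :=
    (Real.continuous_exp.tendsto _).comp hg
  apply hexp.congr'
  filter_upwards [eventually_ge_atTop 1] with d hd1
  have hd1' : (1:ℝ) ≤ (d:ℝ) := by exact_mod_cast hd1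
  have hsd : 0 < Real.sqrt d := Real.sqrt_pos.mpr (by linarith)
  have hxpos : 0 < x d := div_pos hu hsd
  rw [H_eq d hd1 hxpos, hgdef, hRdef]
  congr 1
  ring

open MeasureTheory Set in
private lemma laplace :
    Tendsto (fun d : ℕ => Real.sqrt d *
      ∫ s in Ioi (0:ℝ), (1+s)^(d-1) * Real.exp (-(((d:ℝ)+1)*s))) atTop
      (nhds (Real.sqrt (π/2))) := by
  have hDCT : Tendsto (fun d : ℕ => ∫ u in Ioi (0:ℝ),
      (1+u/Real.sqrt d)^(d-1) * Real.exp (-(((d:ℝ)+1)*(u/Real.sqrt d)))) atTop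
      (nhds (∫ u in Ioi (0:ℝ), Real.exp (-(1/2)*u^2))) := by
    apply tendsto_integral_filter_of_dominated_convergence
      (bound := fun u => Real.exp (-(1/7)*u^2) + Real.exp (-(1/8)*u))
    · filter_upwards with d
      exact (((continuous_const.add (continuous_id.div_const _)).pow (d-1)).mul
        (Real.continuous_exp.comp
          ((continuous_const.mul (continuous_id.div_const _)).neg))).aestronglyMeasurable
    · filter_upwards [eventually_ge_atTop 1] with d hd
      filter_upwards [ae_restrict_mem measurableSet_Ioi] with u hu
      have hd1 : (1:ℝ) ≤ (d:ℝ) := by exact_mod_cast hd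
      have hsd : 0 < Real.sqrt d := Real.sqrt_pos.mpr (by linarith)
      have hu0 : (0:ℝ) < u := hu
      rw [Real.norm_eq_abs, abs_of_nonneg (by positivity)]
      exact H_le d hd u hu0
    · exact ((integrable_exp_neg_mul_sq (by norm_num : (0:ℝ) < 1/7)).integrableOn).add
        (exp_neg_integrableOn_Ioi 0 (by norm_num : (0:ℝ) < 1/8))
    · filter_upwards [ae_restrict_mem measurableSet_Ioi] with u hu
      exact H_lim u hu
  have hgauss : (∫ u in Ioi (0:ℝ), Real.exp (-(1/2)*u^2)) = Real.sqrt (π/2) := by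
    rw [integral_gaussian_Ioi]
    rw [show π/(1/2:ℝ) = 2^2*(π/2) by ring, Real.sqrt_mul (by positivity),
      Real.sqrt_sq (by norm_num : (0:ℝ) ≤ 2)]
    ring
  rw [hgauss] at hDCT
  apply hDCT.congr'
  filter_upwards [eventually_ge_atTop 1] with d hd
  have hd1 : (1:ℝ) ≤ (d:ℝ) := by exact_mod_cast hd
  have hsd : 0 < Real.sqrt d := Real.sqrt_pos.mpr (by linarith)
  have hb : 0 < (Real.sqrt (d:ℝ))⁻¹ := inv_pos.mpr hsd
  have hsub := integral_comp_mul_left_Ioi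
    (fun s => (1+s)^(d-1) * Real.exp (-(((d:ℝ)+1)*s))) 0 hb
  simp only [mul_zero, inv_inv, smul_eq_mul] at hsub
  have h2 : (fun u : ℝ => (1+u/Real.sqrt d)^(d-1) * Real.exp (-(((d:ℝ)+1)*(u/Real.sqrt d))))
      = fun u : ℝ => (fun s => (1+s)^(d-1) * Real.exp (-(((d:ℝ)+1)*s)))
        ((Real.sqrt (d:ℝ))⁻¹ * u) := by
    funext u
    rw [mul_comm ((Real.sqrt (d:ℝ))⁻¹) u, ← div_eq_mul_inv]
  rw [h2, hsub]

open MeasureTheory Set in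
theorem beta_asymptotic :
    Tendsto (fun d : ℕ => beta d * Real.sqrt (2 * (d : ℝ) / Real.pi)) atTop (nhds 1) := by
  have hpi : (0:ℝ) < π := Real.pi_pos
  have hsqrt_split : ∀ d : ℕ, Real.sqrt (2*(d:ℝ)/π) = Real.sqrt (2/π) * Real.sqrt d := by
    intro d
    rw [show 2*(d:ℝ)/π = (2/π)*(d:ℝ) by ring, Real.sqrt_mul (by positivity)]
  have hT1 : Tendsto (fun d : ℕ => Real.sqrt (2*(d:ℝ)/π) *
      ∫ s in Ioi (0:ℝ), (1+s)^(d-1) * Real.exp (-(((d:ℝ)+1)*s))) atTop (nhds 1) := by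
    have h1 := laplace.const_mul (Real.sqrt (2/π))
    have h2 : Real.sqrt (2/π) * Real.sqrt (π/2) = 1 := by
      rw [← Real.sqrt_mul (by positivity), show (2/π)*(π/2) = 1 by field_simp, Real.sqrt_one]
    rw [h2] at h1
    apply h1.congr fun d => ?_
    rw [hsqrt_split d]
    ring
  have hT2 : Tendsto (fun d : ℕ => Real.sqrt (2*(d:ℝ)/π) *
      ((Nat.factorial (d-1) : ℝ) / ((d:ℝ)+1)^d)) atTop (nhds 0) := by
    have hub : Tendsto (fun d : ℕ => Real.sqrt (2/π) / Real.sqrt d) atTop (nhds 0) :=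
      tendsto_const_nhds.div_atTop sqrt_nat_atTop
    apply tendsto_of_tendsto_of_tendsto_of_le_of_le' tendsto_const_nhds hub
    · filter_upwards with d
      positivity
    · filter_upwards [eventually_ge_atTop 1] with d hd
      have hd1 : (1:ℝ) ≤ (d:ℝ) := by exact_mod_cast hd
      have hd0 : (0:ℝ) < (d:ℝ) := by linarith
      have hsd : 0 < Real.sqrt d := Real.sqrt_pos.mpr hd0
      have hf1 : ((Nat.factorial (d-1) : ℕ) : ℝ) ≤ (d:ℝ)^(d-1) := by
        have h1 : Nat.factorial (d-1) ≤ (d-1)^(d-1) := Nat.factorial_le_pow _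
        have h2 : (d-1)^(d-1) ≤ d^(d-1) := Nat.pow_le_pow_left (by omega) _
        calc ((Nat.factorial (d-1) : ℕ) : ℝ) ≤ ((d^(d-1) : ℕ) : ℝ) := by
              exact_mod_cast le_trans h1 h2
          _ = (d:ℝ)^(d-1) := by push_cast; ring
      have hf2 : (d:ℝ)^(d-1) / ((d:ℝ)+1)^d ≤ 1/(d:ℝ) := by
        rw [div_le_div_iff₀ (by positivity) hd0]
        have h3 : (d:ℝ)^(d-1) * (d:ℝ) = (d:ℝ)^d := by
          rw [← pow_succ]
          congr 1
          omega
        rw [h3]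
        have h4 : (d:ℝ)^d ≤ ((d:ℝ)+1)^d := pow_le_pow_left₀ (by positivity) (by linarith) d
        linarith
      have hfrac : (Nat.factorial (d-1) : ℝ) / ((d:ℝ)+1)^d ≤ 1/(d:ℝ) := by
        refine le_trans ?_ hf2
        apply div_le_div_of_nonneg_right ?_ (by positivity)
        · exact hf1
      calc Real.sqrt (2*(d:ℝ)/π) * ((Nat.factorial (d-1) : ℝ) / ((d:ℝ)+1)^d)
          ≤ Real.sqrt (2*(d:ℝ)/π) * (1/(d:ℝ)) := by
            apply mul_le_mul_of_nonneg_left hfrac (Real.sqrt_nonneg _)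
        _ = Real.sqrt (2/π) * (Real.sqrt d / (d:ℝ)) := by
            rw [hsqrt_split d]; ring
        _ = Real.sqrt (2/π) / Real.sqrt d := by
            have hdd : Real.sqrt d * Real.sqrt d = (d:ℝ) := Real.mul_self_sqrt hd0.le
            have h5 : Real.sqrt d / (d:ℝ) = 1 / Real.sqrt d := by
              rw [div_eq_div_iff hd0.ne' hsd.ne']
              linarith [hdd]
            rw [h5]
            ring
  have hmain := hT1.sub hT2
  rw [sub_zero] at hmain
  apply hmain.congr'
  filter_upwards [eventually_ge_atTop 1] with d hd
  have hd1 : (1:ℝ) ≤ (d:ℝ) := by exact_mod_cast hd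
  have hKI := key_integral (d-1)
  have hm : d - 1 + 1 = d := by omega
  have hcast : (((d-1:ℕ)):ℝ) + 2 = (d:ℝ) + 1 := by
    have := Nat.cast_sub hd (R := ℝ)
    simp at this
    rw [this]; ring
  rw [hm, hcast] at hKI
  have hE : Real.exp ((d:ℝ)+1) * Real.exp (-((d:ℝ)+1)) = 1 := by
    rw [← Real.exp_add, show ((d:ℝ)+1) + -((d:ℝ)+1) = 0 by ring, Real.exp_zero]
  have hbeta : beta d = (∫ s in Ioi (0:ℝ), (1+s)^(d-1) * Real.exp (-(((d:ℝ)+1)*s)))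
      - (Nat.factorial (d-1) : ℝ) / ((d:ℝ)+1)^d := by
    rw [beta, incGamma, hKI, ← sub_div]
    congr 1
    linear_combination ((Nat.factorial (d-1) : ℝ) *
      ∑ i ∈ range d, ((d:ℝ)+1)^i / (Nat.factorial i : ℝ)) * hE
  rw [hbeta]
  ring
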